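/- Let E_1, …, E_m be Banach lattices and let F be a Banach space. The set of separately M-weakly compact m-linear operators, that is, continuous m-linear operators A : E_1 × ⋯ × E_m → F such that for every k = 1,…,m and all fixed a_i ∈ E_i (i ≠ k), the linear operator x_k ↦ A(a_1,…,a_{k−1},x_k,a_{k+1},…,a_m) sends norm bounded disjoint sequences in E_k to norm null sequences in F, is a closed linear subspace of L(E_1,…,E_m;F). -/

import Mathlib

open Filter Topology Bornology

/-- The set of separately M-weakly compact `m`-linear operators from Banach lattices
`E₁, …, E_m` to a Banach space `F`: for every coordinate `i` and all fixed vectors in the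
other coordinates, the associated linear operator `E i → F` sends norm bounded disjoint
sequences to norm null sequences. -/
def SeparatelyMWeaklyCompact {m : ℕ} (E : Fin m → Type*) (F : Type*)
    [∀ i, NormedAddCommGroup (E i)] [∀ i, Lattice (E i)]
    [∀ i, IsOrderedAddMonoid (E i)] [∀ i, HasSolidNorm (E i)] [∀ i, NormedSpace ℝ (E i)]
    [NormedAddCommGroup F] [NormedSpace ℝ F] : Set (ContinuousMultilinearMap ℝ E F) :=
  {A | ∀ (i : Fin m) (a : ∀ j, E j) (x : ℕ → E i), IsBounded (Set.range x) →
    (∀ j k, j ≠ k → |x j| ⊓ |x k| = 0) →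
    Tendsto (fun n => ‖A.toContinuousLinearMap a i (x n)‖) atTop (nhds 0)}

private lemma aux_norm_le {m : ℕ} {E : Fin m → Type*} {F : Type*}
    [∀ i, NormedAddCommGroup (E i)] [∀ i, Lattice (E i)]
    [∀ i, IsOrderedAddMonoid (E i)] [∀ i, HasSolidNorm (E i)] [∀ i, NormedSpace ℝ (E i)]
    [NormedAddCommGroup F] [NormedSpace ℝ F]
    (A : ContinuousMultilinearMap ℝ E F) (a : ∀ j, E j) (i : Fin m) (y : E i) :
    ‖A.toContinuousLinearMap a i y‖ ≤
      ‖A‖ * ((Finset.univ.erase i).prod fun j => ‖a j‖) * ‖y‖ := by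
  have h1 : ‖A (Function.update a i y)‖ ≤ ‖A‖ * ∏ j, ‖Function.update a i y j‖ :=
    A.le_opNorm _
  have h2 : (∏ j, ‖Function.update a i y j‖)
      = ‖y‖ * (Finset.univ.erase i).prod fun j => ‖a j‖ := by
    have : (fun j => ‖Function.update a i y j‖)
        = Function.update (fun j => ‖a j‖) i ‖y‖ := by
      funext j
      exact (Function.apply_update (fun _ v => ‖v‖) a i y j)
    rw [this, Finset.prod_update_of_mem (Finset.mem_univ i), Finset.erase_eq]
  simp only [ContinuousMultilinearMap.toContinuousLinearMap_apply]
  calc ‖A (Function.update a i y)‖ ≤ ‖A‖ * ∏ j, ‖Function.update a i y j‖ := h1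
    _ = ‖A‖ * ((Finset.univ.erase i).prod fun j => ‖a j‖) * ‖y‖ := by rw [h2]; ring

theorem stmt14 {m : ℕ} (E : Fin m → Type*) (F : Type*)
    [∀ i, NormedAddCommGroup (E i)] [∀ i, Lattice (E i)]
    [∀ i, IsOrderedAddMonoid (E i)] [∀ i, HasSolidNorm (E i)] [∀ i, NormedSpace ℝ (E i)]
    [∀ i, CompleteSpace (E i)]
    [NormedAddCommGroup F] [NormedSpace ℝ F] [CompleteSpace F] :
    IsClosed (SeparatelyMWeaklyCompact E F) ∧
      (0 : ContinuousMultilinearMap ℝ E F) ∈ SeparatelyMWeaklyCompact E F ∧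
      (∀ A₁ ∈ SeparatelyMWeaklyCompact E F, ∀ A₂ ∈ SeparatelyMWeaklyCompact E F,
        A₁ + A₂ ∈ SeparatelyMWeaklyCompact E F) ∧
      (∀ (c : ℝ), ∀ A ∈ SeparatelyMWeaklyCompact E F,
        c • A ∈ SeparatelyMWeaklyCompact E F) := by
  refine ⟨?_, ?_, ?_, ?_⟩
  · -- closedness
    apply IsSeqClosed.isClosed
    intro B A hmem hlim i a x hx hdisj
    obtain ⟨M, hM⟩ := isBounded_iff_forall_norm_le.mp hx
    have hM' : ∀ n, ‖x n‖ ≤ M := fun n => hM _ (Set.mem_range_self n)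
    set C : ℝ := (Finset.univ.erase i).prod fun j => ‖a j‖ with hC
    have hC0 : 0 ≤ C := Finset.prod_nonneg fun j _ => norm_nonneg _
    have hM0 : 0 ≤ M := le_trans (norm_nonneg _) (hM' 0)
    rw [NormedAddCommGroup.tendsto_nhds_zero]
    intro ε hε
    have hεd : 0 < ε / (2 * (C * M + 1)) := by positivity
    obtain ⟨N, hN⟩ := (Metric.tendsto_atTop.mp hlim) _ hεd
    have hBN := hmem N i a x hx hdisj
    rw [NormedAddCommGroup.tendsto_nhds_zero] at hBN
    filter_upwards [hBN (ε / 2) (by positivity)] with n hn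
    have key : ‖A.toContinuousLinearMap a i (x n)‖ ≤
        ‖(B N).toContinuousLinearMap a i (x n)‖ +
          ‖A - B N‖ * C * ‖x n‖ := by
      have := aux_norm_le (A - B N) a i (x n)
      have heq : (A - B N).toContinuousLinearMap a i (x n)
          = A.toContinuousLinearMap a i (x n) - (B N).toContinuousLinearMap a i (x n) := by
        simp [ContinuousMultilinearMap.toContinuousLinearMap_apply]
      rw [heq] at this
      have := (norm_sub_norm_le _ _).trans this
      linarith
    have hdist : ‖A - B N‖ < ε / (2 * (C * M + 1)) := by
      have := hN N le_rfl
      rw [dist_eq_norm, ← norm_neg] at this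
      simpa [neg_sub] using this
    have h2 : ‖A - B N‖ * C * ‖x n‖ ≤ ‖A - B N‖ * (C * M + 1) := by
      have h3 : C * ‖x n‖ ≤ C * M + 1 := by nlinarith [hM' n, hC0, norm_nonneg (x n)]
      calc ‖A - B N‖ * C * ‖x n‖ = ‖A - B N‖ * (C * ‖x n‖) := by ring
        _ ≤ ‖A - B N‖ * (C * M + 1) := by
            exact mul_le_mul_of_nonneg_left h3 (norm_nonneg _)
    have h4 : ‖A - B N‖ * (C * M + 1) < ε / 2 := by
      have hpos : (0:ℝ) < C * M + 1 := by positivity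
      calc ‖A - B N‖ * (C * M + 1) < ε / (2 * (C * M + 1)) * (C * M + 1) :=
            mul_lt_mul_of_pos_right hdist hpos
        _ = ε / 2 := by field_simp
    rw [Real.norm_eq_abs, abs_of_nonneg (norm_nonneg _)]
    rw [Real.norm_eq_abs, abs_of_nonneg (norm_nonneg _)] at hn
    linarith
  · intro i a x _ _
    simp [ContinuousMultilinearMap.toContinuousLinearMap_apply]
  · intro A₁ h₁ A₂ h₂ i a x hx hdisj
    have := (h₁ i a x hx hdisj).add (h₂ i a x hx hdisj)
    rw [add_zero] at this
    apply squeeze_zero (fun n => norm_nonneg _) _ this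
    intro n
    simp only [ContinuousMultilinearMap.toContinuousLinearMap_apply,
      ContinuousMultilinearMap.add_apply]
    exact norm_add_le _ _
  · intro c A hA i a x hx hdisj
    have := (hA i a x hx hdisj).const_mul |c|
    rw [mul_zero] at this
    refine this.congr fun n => ?_
    simp [ContinuousMultilinearMap.toContinuousLinearMap_apply, norm_smul]
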